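/- Let Z ⊂ A^n be a closed subscheme whose projective closure Z̄ ⊂ P^n is a positive-dimensional complete intersection meeting the hyperplane at infinity H properly. Then the homogeneous limit Z^0 of Z (under the scaling action centered at a point O ∈ A^n) equals the affine cone with vertex O over Z̄ ∩ H, and Z^0 is a complete intersection subscheme of A^n. -/

import Mathlib

open MvPolynomial

noncomputable section

/-- The initial form (top-degree homogeneous part) of a polynomial. -/
def initialForm {n : ℕ} (f : MvPolynomial (Fin n) ℂ) : MvPolynomial (Fin n) ℂ :=
  MvPolynomial.homogeneousComponent f.totalDegree f

/-- The initial ideal: generated by top-degree parts of the nonzero elements. -/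
def initialIdeal {n : ℕ} (I : Ideal (MvPolynomial (Fin n) ℂ)) :
    Ideal (MvPolynomial (Fin n) ℂ) :=
  Ideal.span { g | ∃ f ∈ I, f ≠ 0 ∧ g = initialForm f }

namespace HomLimitAux

open RingTheory.Sequence

section general

variable {σ : Type*} {A : Type*} [CommRing A]

lemma sub_homogeneousComponent (f : MvPolynomial σ A) {m : ℕ} (hm : f.totalDegree ≤ m) :
    f - homogeneousComponent m f = 0 ∨ (f - homogeneousComponent m f).totalDegree < m := by
  rcases eq_or_ne (f - homogeneousComponent m f) 0 with h | h
  · exact Or.inl h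
  right
  have hm0 : 0 < m := by
    rcases Nat.eq_zero_or_pos m with rfl | h0
    · exfalso
      apply h
      have hf : f ∈ homogeneousSubmodule σ A 0 := by
        rw [mem_homogeneousSubmodule, ← totalDegree_zero_iff_isHomogeneous]
        omega
      rw [homogeneousComponent_of_mem hf, if_pos rfl, sub_self]
    · exact h0
  rw [MvPolynomial.totalDegree, Finset.sup_lt_iff (by simpa using hm0)]
  intro d hd
  have hc : coeff d (f - homogeneousComponent m f) ≠ 0 := mem_support_iff.mp hd
  rw [coeff_sub, coeff_homogeneousComponent] at hc
  have hdeg : (d.sum fun _ e => e) = d.degree := by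
    simp [Finsupp.degree, Finsupp.sum]
    rfl
  by_contra hge
  push_neg at hge
  rcases eq_or_lt_of_le hge with heq | hlt
  · rw [hdeg] at heq
    rw [if_pos heq.symm, sub_self] at hc
    exact hc rfl
  · have : coeff d f = 0 := coeff_eq_zero_of_totalDegree_lt (lt_of_le_of_lt hm hlt)
    rw [if_neg (by rw [← hdeg]; omega), sub_zero] at hc
    exact hc this


lemma homogeneousComponent_mul_right {g : MvPolynomial σ A} {d : ℕ}
    (hg : g.IsHomogeneous d) (h : MvPolynomial σ A) (m : ℕ) (hdm : d ≤ m) :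
    homogeneousComponent m (h * g) = homogeneousComponent (m - d) h * g := by
  conv_lhs => rw [← sum_homogeneousComponent h, Finset.sum_mul, map_sum]
  have hterm : ∀ k, homogeneousComponent m (homogeneousComponent k h * g)
      = if m = k + d then homogeneousComponent k h * g else 0 := fun k =>
    homogeneousComponent_of_mem
      ((mem_homogeneousSubmodule _ _).mpr ((homogeneousComponent_isHomogeneous k h).mul hg))
  rw [Finset.sum_congr rfl fun k _ => hterm k]
  rw [Finset.sum_eq_single (m - d)]
  · rw [if_pos (by omega)]
  · intro b _ hb
    rw [if_neg (by omega)]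
  · intro hnm
    rw [Finset.mem_range] at hnm
    rw [if_pos (by omega)]
    rw [homogeneousComponent_eq_zero (m - d) h (by omega), zero_mul]


lemma homogeneousComponent_mul_right_zero {g : MvPolynomial σ A} {d : ℕ}
    (hg : g.IsHomogeneous d) (h : MvPolynomial σ A) (m : ℕ) (hmd : m < d) :
    homogeneousComponent m (h * g) = 0 := by
  conv_lhs => rw [← sum_homogeneousComponent h, Finset.sum_mul, map_sum]
  refine Finset.sum_eq_zero fun k _ => ?_
  rw [homogeneousComponent_of_mem
    ((mem_homogeneousSubmodule _ _).mpr ((homogeneousComponent_isHomogeneous k h).mul hg))]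
  rw [if_neg (by omega)]


lemma sum_antisym {M : Type*} [AddCommGroup M] [Module ℂ M] {c : ℕ}
    (A : Fin c → Fin c → M) (h : ∀ i j, A i j = - A j i) :
    ∑ i, ∑ j, A i j = 0 := by
  have hS : (∑ i, ∑ j, A i j) = - ∑ i, ∑ j, A i j := by
    calc ∑ i, ∑ j, A i j = ∑ i, ∑ j, -(A j i) := by
          exact Finset.sum_congr rfl fun i _ => Finset.sum_congr rfl fun j _ => h i j
      _ = - ∑ i, ∑ j, A j i := by simp
      _ = - ∑ i, ∑ j, A i j := by rw [Finset.sum_comm]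
  have h2 : (2 : ℂ) • (∑ i, ∑ j, A i j) = 0 := by
    rw [two_smul]
    nth_rewrite 2 [hS]
    rw [add_neg_cancel]
  rcases smul_eq_zero.mp h2 with h | h
  · exact absurd h two_ne_zero
  · exact h


lemma comp_top (a F : MvPolynomial σ A) {D : ℕ} (hf : 0 < F.totalDegree)
    (ha : a.totalDegree + F.totalDegree ≤ D) :
    homogeneousComponent D (a * F) =
      homogeneousComponent (D - F.totalDegree) a * homogeneousComponent F.totalDegree F := by
  set d := F.totalDegree with hdd
  set b := homogeneousComponent (D - d) a with hb
  set g := homogeneousComponent d F with hg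
  have hdD : d ≤ D := by omega
  have key : a * F = b * g + (b * (F - g) + (a - b) * F) := by ring
  rw [key, map_add, map_add]
  have h1 : homogeneousComponent D (b * g) = b * g := by
    rw [homogeneousComponent_of_mem ((mem_homogeneousSubmodule _ _).mpr
      ((homogeneousComponent_isHomogeneous (D - d) a).mul
        (homogeneousComponent_isHomogeneous d F)))]
    rw [if_pos (by omega)]
  have h2 : homogeneousComponent D (b * (F - g)) = 0 := by
    rcases sub_homogeneousComponent F (le_refl d) with h0 | h0 <;> rw [← hg] at h0
    · rw [h0, mul_zero, map_zero]
    · apply homogeneousComponent_eq_zero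
      have hbd : b.totalDegree ≤ D - d :=
        (homogeneousComponent_isHomogeneous (D - d) a).totalDegree_le
      calc (b * (F - g)).totalDegree ≤ b.totalDegree + (F - g).totalDegree :=
            totalDegree_mul _ _
        _ < D := by omega
  have h3 : homogeneousComponent D ((a - b) * F) = 0 := by
    rcases sub_homogeneousComponent a (show a.totalDegree ≤ D - d by omega) with h0 | h0 <;> rw [← hb] at h0
    · rw [h0, zero_mul, map_zero]
    · apply homogeneousComponent_eq_zero
      calc ((a - b) * F).totalDegree ≤ (a - b).totalDegree + F.totalDegree :=
            totalDegree_mul _ _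
        _ < D := by omega
  rw [h1, h2, h3, add_zero, add_zero]

end general

lemma syzygy {R : Type*} [CommRing R] : ∀ {c : ℕ} (g : Fin c → R),
    IsWeaklyRegular R (List.ofFn g) → ∀ b : Fin c → R, (∑ j, b j * g j) = 0 →
    ∃ h : Fin c → Fin c → R, (∀ i j, h i j = - h j i) ∧ ∀ j, b j = ∑ i, h i j * g i := by
  intro c
  induction c with
  | zero =>
    intro g _ b _
    exact ⟨0, by simp, fun j => j.elim0⟩
  | succ c ih =>
    intro g hreg b hb
    set g' : Fin c → R := fun i => g i.castSucc with hg'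
    have hsplit : List.ofFn g = List.ofFn g' ++ [g (Fin.last c)] := by
      rw [List.ofFn_succ']
      simp [List.concat_eq_append, hg']
    rw [hsplit, isWeaklyRegular_append_iff] at hreg
    obtain ⟨hreg', hlast⟩ := hreg
    rw [isWeaklyRegular_singleton_iff] at hlast
    set I : Ideal R := Ideal.ofList (List.ofFn g') with hI
    have hItop : (I • ⊤ : Submodule R R) = I := by
      rw [smul_eq_mul, Ideal.mul_top]
    rw [Fin.sum_univ_castSucc] at hb
    have hmemI : ∀ j : Fin c, g' j ∈ I := fun j =>
      Ideal.subset_span (by simp [List.mem_ofFn])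
    have hbc : b (Fin.last c) ∈ I := by
      have hprod : b (Fin.last c) * g (Fin.last c) ∈ I := by
        have heq : b (Fin.last c) * g (Fin.last c)
            = -(∑ j : Fin c, b j.castSucc * g' j) := eq_neg_of_add_eq_zero_right hb
        rw [heq]
        exact neg_mem (Ideal.sum_mem I fun j _ => Ideal.mul_mem_left I _ (hmemI j))
      have hq : g (Fin.last c) • (Submodule.Quotient.mk (p := (I • ⊤ : Submodule R R))
          (b (Fin.last c))) = g (Fin.last c) • (0 : R ⧸ (I • ⊤ : Submodule R R)) := by
        rw [smul_zero, ← Submodule.Quotient.mk_smul, Submodule.Quotient.mk_eq_zero, hItop,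
          smul_eq_mul, mul_comm]
        exact hprod
      have h0 := hlast hq
      rw [Submodule.Quotient.mk_eq_zero, hItop] at h0
      exact h0
    -- write b last as combination of the g'
    have hbc' : b (Fin.last c) ∈ Ideal.span (Set.range g') := by
      have : ({r | r ∈ List.ofFn g'} : Set R) = Set.range g' := by
        ext x; simp [List.mem_ofFn]
      rwa [hI, Ideal.ofList, this] at hbc
    obtain ⟨k, hk⟩ := Ideal.mem_span_range_iff_exists_fun.mp hbc'
    set b' : Fin c → R := fun j => b j.castSucc + k j * g (Fin.last c) with hb'
    have hb'0 : ∑ j, b' j * g' j = 0 := by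
      have : ∑ j, b' j * g' j
          = (∑ j, b j.castSucc * g' j) + (∑ j, k j * g' j) * g (Fin.last c) := by
        rw [Finset.sum_mul]
        rw [← Finset.sum_add_distrib]
        refine Finset.sum_congr rfl fun j _ => by ring
      rw [this, hk]
      linear_combination hb
    obtain ⟨h0, hanti0, hh0⟩ := ih g' hreg' b' hb'0
    refine ⟨fun i => Fin.lastCases (Fin.lastCases 0 k i)
      (fun j' => Fin.lastCases (-(k j')) (fun i' => h0 i' j') i), ?_, ?_⟩
    · intro i j
      induction j using Fin.lastCases with
      | last =>
        induction i using Fin.lastCases with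
        | last => simp
        | cast i' => simp
      | cast j' =>
        induction i using Fin.lastCases with
        | last => simp
        | cast i' => simp [hanti0 i' j']
    · intro j
      induction j using Fin.lastCases with
      | last =>
        rw [Fin.sum_univ_castSucc]
        simp only [Fin.lastCases_last, Fin.lastCases_castSucc]
        simp only [zero_mul, add_zero]
        exact hk.symm
      | cast j' =>
        rw [Fin.sum_univ_castSucc]
        simp only [Fin.lastCases_last, Fin.lastCases_castSucc]
        have h := hh0 j'
        simp only [hb', hg'] at h
        linear_combination h


lemma key {n c : ℕ} (f : Fin c → MvPolynomial (Fin n) ℂ)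
    (hdeg : ∀ j, 0 < (f j).totalDegree)
    (hreg : IsWeaklyRegular (MvPolynomial (Fin n) ℂ) (List.ofFn fun j => initialForm (f j))) :
    ∀ D (F : MvPolynomial (Fin n) ℂ) (a : Fin c → MvPolynomial (Fin n) ℂ),
      (∀ j, a j = 0 ∨ (a j).totalDegree + (f j).totalDegree ≤ D) →
      F = ∑ j, a j * f j →
      initialForm F ∈ Ideal.span (Set.range fun j => initialForm (f j)) := by
  intro D
  induction D using Nat.strong_induction_on with
  | _ D IH =>
  intro F a ha hF
  set d : Fin c → ℕ := fun j => (f j).totalDegree with hd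
  set g : Fin c → MvPolynomial (Fin n) ℂ := fun j => initialForm (f j) with hg
  have hgj : ∀ j, (g j).IsHomogeneous (d j) := fun j =>
    homogeneousComponent_isHomogeneous _ _
  have hFD : F.totalDegree ≤ D := by
    rw [hF]
    refine (totalDegree_finset_sum _ _).trans (Finset.sup_le fun j _ => ?_)
    rcases ha j with h0 | h0
    · simp [h0]
    · exact (totalDegree_mul _ _).trans h0
  have hterm : ∀ j, homogeneousComponent D (a j * f j)
      = homogeneousComponent (D - d j) (a j) * g j := by
    intro j
    rcases ha j with h0 | h0
    · rw [h0, zero_mul, map_zero, map_zero, zero_mul]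
    · exact comp_top (a j) (f j) (hdeg j) h0
  have hcompD : homogeneousComponent D F
      = ∑ j, homogeneousComponent (D - d j) (a j) * g j := by
    rw [hF, map_sum]
    exact Finset.sum_congr rfl fun j _ => hterm j
  rcases eq_or_lt_of_le hFD with heq | hlt
  · show homogeneousComponent F.totalDegree F ∈ _
    rw [heq, hcompD]
    exact Ideal.sum_mem _ fun j _ =>
      Ideal.mul_mem_left _ _ (Ideal.subset_span ⟨j, rfl⟩)
  · -- recursion step
    set b : Fin c → MvPolynomial (Fin n) ℂ :=
      fun j => homogeneousComponent (D - d j) (a j) with hb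
    have hb0 : ∑ j, b j * g j = 0 := by
      rw [← hcompD]
      exact homogeneousComponent_eq_zero D F hlt
    obtain ⟨h, hanti, hsyz⟩ := syzygy g (by rw [hg]; exact hreg) b hb0
    set h' : Fin c → Fin c → MvPolynomial (Fin n) ℂ :=
      fun i j => if d i + d j ≤ D then homogeneousComponent (D - d i - d j) (h i j) else 0
      with hh'
    have hanti' : ∀ i j, h' i j = - h' j i := by
      intro i j
      simp only [hh']
      by_cases hij : d i + d j ≤ D
      · rw [if_pos hij, if_pos (by omega)]
        have hij2 : D - d i - d j = D - d j - d i := by omega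
        rw [hij2, hanti i j, map_neg]
      · rw [if_neg hij, if_neg (by omega), neg_zero]
    have hsyz' : ∀ j, b j = ∑ i, h' i j * g i := by
      intro j
      have h1 : homogeneousComponent (D - d j) (b j) = b j := by
        simp only [hb]
        rw [homogeneousComponent_of_mem (homogeneousComponent_mem _ _), if_pos rfl]
      calc b j = homogeneousComponent (D - d j) (b j) := h1.symm
        _ = homogeneousComponent (D - d j) (∑ i, h i j * g i) := by rw [← hsyz j]
        _ = ∑ i, homogeneousComponent (D - d j) (h i j * g i) := map_sum _ _ _
        _ = ∑ i, h' i j * g i := Finset.sum_congr rfl fun i _ => by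
            by_cases hij : d i + d j ≤ D
            · rw [homogeneousComponent_mul_right (hgj i) _ _ (by omega)]
              simp only [hh']
              rw [if_pos hij]
              have hij2 : D - d j - d i = D - d i - d j := by omega
              rw [hij2]
            · rw [homogeneousComponent_mul_right_zero (hgj i) _ _
                (by simp only [hd] at hij ⊢; have := hdeg i; have := hdeg j; omega)]
              simp only [hh']
              rw [if_neg hij, zero_mul]
    set r : Fin c → MvPolynomial (Fin n) ℂ := fun i => f i - g i with hr
    set a' : Fin c → MvPolynomial (Fin n) ℂ :=
      fun j => (a j - b j) + ∑ i, h' j i * r i with ha'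
    have e1 : ∑ j, b j * f j = ∑ j, ∑ i, h' i j * g i * r j := by
      have step : ∀ j, b j * f j = b j * g j + b j * r j := fun j => by
        simp only [hr]; ring
      rw [Finset.sum_congr rfl fun j _ => step j, Finset.sum_add_distrib, hb0, zero_add]
      refine Finset.sum_congr rfl fun j _ => ?_
      rw [hsyz' j, Finset.sum_mul]
    have e2 : ∑ j, (∑ i, h' j i * r i) * f j = ∑ j, ∑ i, h' i j * g i * r j := by
      have step : ∀ j, (∑ i, h' j i * r i) * f j
          = (∑ i, h' j i * r i * g j) + (∑ i, h' j i * r i * r j) := fun j => by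
        rw [Finset.sum_mul, ← Finset.sum_add_distrib]
        refine Finset.sum_congr rfl fun i _ => ?_
        have hfj : f j = g j + r j := by simp only [hr]; ring
        rw [hfj]; ring
      rw [Finset.sum_congr rfl fun j _ => step j, Finset.sum_add_distrib]
      have hB : ∑ j, ∑ i, h' j i * r i * r j = 0 := by
        apply sum_antisym (fun j i => h' j i * r i * r j)
        intro i j
        rw [hanti' i j]; ring
      rw [hB, add_zero, Finset.sum_comm]
      exact Finset.sum_congr rfl fun j _ => Finset.sum_congr rfl fun i _ => by ring
    have hsum' : F = ∑ j, a' j * f j := by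
      have split : ∑ j, a' j * f j
          = (∑ j, (a j - b j) * f j) + ∑ j, (∑ i, h' j i * r i) * f j := by
        rw [← Finset.sum_add_distrib]
        refine Finset.sum_congr rfl fun j _ => ?_
        simp only [ha']; ring
      have split2 : ∑ j, (a j - b j) * f j = (∑ j, a j * f j) - ∑ j, b j * f j := by
        rw [← Finset.sum_sub_distrib]
        exact Finset.sum_congr rfl fun j _ => by ring
      rw [split, split2, e1, e2, ← hF]
      ring
    have hbound : ∀ j, a' j = 0 ∨ (a' j).totalDegree + (f j).totalDegree ≤ D - 1 := by
      intro j
      have hadeg : (a j).totalDegree ≤ D - d j := by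
        rcases ha j with h0 | h0
        · simp [h0]
        · simp only [hd]; omega
      by_cases hj : d j + 1 ≤ D
      · right
        have habj : (a j - b j).totalDegree ≤ D - d j - 1 := by
          rcases sub_homogeneousComponent (a j) hadeg with h1 | h1
          · simp only [hb]
            rw [h1]
            exact Nat.zero_le _
          · simp only [hb]
            omega
        have hsumb : (∑ i, h' j i * r i).totalDegree ≤ D - d j - 1 := by
          refine (totalDegree_finset_sum _ _).trans (Finset.sup_le fun i _ => ?_)
          by_cases hij : d j + d i ≤ D
          · rcases sub_homogeneousComponent (f i) (le_refl (f i).totalDegree) with h2 | h2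
            · have hri0 : r i = 0 := by
                simp only [hr, hg, initialForm]
                exact h2
              rw [hri0, mul_zero, totalDegree_zero]
              exact Nat.zero_le _
            · have hhji : (h' j i).totalDegree ≤ D - d j - d i := by
                simp only [hh', if_pos hij]
                exact (homogeneousComponent_isHomogeneous _ _).totalDegree_le
              have hri : (r i).totalDegree < d i := by
                simp only [hr, hg, initialForm, hd]
                exact h2
              refine (totalDegree_mul _ _).trans ?_
              have h3 := hdeg i
              simp only [hd] at hij hri hhji ⊢
              omega
          · simp only [hh', if_neg hij, zero_mul, totalDegree_zero]
            exact Nat.zero_le _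
        have hfin : (a' j).totalDegree ≤ D - d j - 1 := by
          simp only [ha']
          exact (totalDegree_add _ _).trans (max_le habj hsumb)
        simp only [hd] at hj hfin ⊢
        omega
      · left
        have h1 : a j - b j = 0 := by
          rcases sub_homogeneousComponent (a j) hadeg with h1 | h1
          · simp only [hb]
            exact h1
          · exfalso
            simp only [hd] at hj h1
            omega
        have h2 : ∀ i, h' j i = 0 := fun i => by
          simp only [hh']
          rw [if_neg (by have := hdeg i; simp only [hd] at hj ⊢; omega)]
        simp only [ha']
        rw [h1, zero_add]
        exact Finset.sum_eq_zero fun i _ => by rw [h2 i, zero_mul]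
    have hD1 : D - 1 < D := by omega
    have := IH (D - 1) hD1 F a' hbound hsum'
    exact this

end HomLimitAux

/-- Let `Z ⊂ 𝔸ⁿ` be cut out by `f₁,…,f_c`, and suppose the projective closure
`Z̄ ⊂ ℙⁿ` is a positive-dimensional complete intersection meeting the hyperplane
at infinity properly; algebraically this means that the top-degree forms
`in(f₁),…,in(f_c)` (whose common zero locus in the hyperplane at infinity is
`Z̄ ∩ H`) form a regular sequence.  Then the homogeneous limit `Z⁰ = V(ini(I_Z))`
of `Z` under the scaling action is the affine cone over `Z̄ ∩ H`: its ideal is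
generated by the forms `in(f₁),…,in(f_c)`, and in particular `Z⁰` is a complete
intersection subscheme of `𝔸ⁿ` (cut out by the regular sequence of the
`in(fⱼ)`). -/
theorem homogeneous_limit_of_complete_intersection {n c : ℕ} (hc : c < n)
    (f : Fin c → MvPolynomial (Fin n) ℂ)
    (hdeg : ∀ j, 0 < (f j).totalDegree)
    (hreg : RingTheory.Sequence.IsRegular (MvPolynomial (Fin n) ℂ)
      (List.ofFn fun j => initialForm (f j))) :
    initialIdeal (Ideal.span (Set.range f)) =
      Ideal.span (Set.range fun j => initialForm (f j)) := by
  apply le_antisymm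
  · rw [initialIdeal, Ideal.span_le]
    rintro x ⟨F, hFI, hF0, rfl⟩
    obtain ⟨a, haF⟩ := Ideal.mem_span_range_iff_exists_fun.mp hFI
    exact HomLimitAux.key f hdeg hreg.toIsWeaklyRegular
      (Finset.univ.sup fun j => (a j).totalDegree + (f j).totalDegree) F a
      (fun j => Or.inr (Finset.le_sup (f := fun j => (a j).totalDegree + (f j).totalDegree) (Finset.mem_univ j))) haF.symm
  · rw [Ideal.span_le]
    rintro x ⟨j, rfl⟩
    have hne : f j ≠ 0 := by
      intro h
      have := hdeg j
      rw [h, totalDegree_zero] at this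
      exact lt_irrefl 0 this
    exact Ideal.subset_span ⟨f j, Ideal.subset_span (Set.mem_range_self j), hne, rfl⟩

end
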